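/- Let $z\in\mathbb{C}$ with $\mathrm{Re}\,z>0$, let $k\in\mathbb{Z}_+$ with $k>\mathrm{Re}\,z$, and let $\zeta\in\mathbb{C}\setminus\{0\}$ with $|\arg\zeta|<\pi$. Then $\int_0^{\infty} \frac{\lambda^{z-1}\zeta^k}{(\zeta+\lambda)^k}\,d\lambda = \frac{\zeta^z}{\gamma_k(z)}$, where $\gamma_k(z)=\Gamma(k)/(\Gamma(z)\Gamma(k-z))$ and $\zeta^z$ is defined by the principal branch of the logarithm. -/

import Mathlib

open MeasureTheory Complex Set Filter

lemma absBound (r θ : ℝ) (hr : 0 ≤ r) (lam : ℝ) (hlam : 0 ≤ lam) :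
    Real.sqrt ((1 + Real.cos θ)/2) * (r + lam) ≤
      ‖(r : ℂ) * Complex.exp (θ * Complex.I) + lam‖ := by
  have hre : ((r : ℂ) * Complex.exp (θ * Complex.I) + lam).re = r * Real.cos θ + lam := by
    simp [Complex.add_re, Complex.mul_re, Complex.exp_ofReal_mul_I_re, Complex.exp_ofReal_mul_I_im]
  have him : ((r : ℂ) * Complex.exp (θ * Complex.I) + lam).im = r * Real.sin θ := by
    simp [Complex.add_im, Complex.mul_im, Complex.exp_ofReal_mul_I_re, Complex.exp_ofReal_mul_I_im]
  rw [Complex.norm_def, Complex.normSq_apply, hre, him]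
  have h1 : Real.sqrt ((1 + Real.cos θ)/2) * (r + lam)
      = Real.sqrt ((1 + Real.cos θ)/2 * (r + lam)^2) := by
    rw [Real.sqrt_mul (by nlinarith [Real.neg_one_le_cos θ]), Real.sqrt_sq (by positivity)]
  rw [h1]
  apply Real.sqrt_le_sqrt
  have key : (r * Real.cos θ + lam)*(r * Real.cos θ + lam) + (r * Real.sin θ)*(r * Real.sin θ)
      = r^2 + lam^2 + 2*r*lam*Real.cos θ := by
    linear_combination (r^2) * Real.sin_sq_add_cos_sq θ
  rw [key]
  nlinarith [mul_nonneg (sub_nonneg.2 (Real.cos_le_one θ)) (sq_nonneg (r - lam))]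

lemma realInt {x : ℝ} (hx : -1 < x) {m : ℕ} (hxm : x - m < -1) {r : ℝ} (hr : 0 < r) :
    IntegrableOn (fun lam : ℝ => lam ^ x * (r + lam)⁻¹ ^ m) (Set.Ioi 0) := by
  have hcont : ContinuousOn (fun lam : ℝ => lam ^ x * (r + lam)⁻¹ ^ m) (Set.Ioi 0) := by
    intro lam hlam
    have h0 : (0:ℝ) < lam := hlam
    have h1 : ContinuousAt (fun lam : ℝ => lam ^ x) lam :=
      Real.continuousAt_rpow_const lam x (Or.inl (ne_of_gt h0))
    have h2 : ContinuousAt (fun lam : ℝ => (r + lam)⁻¹ ^ m) lam := by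
      exact (((continuous_const.add continuous_id).continuousAt).inv₀
        (by show r + lam ≠ 0; positivity)).pow m
    exact (h1.mul h2).continuousWithinAt
  have hsplit : Set.Ioi (0:ℝ) = Set.Ioc 0 1 ∪ Set.Ioi 1 := (Set.Ioc_union_Ioi_eq_Ioi zero_le_one).symm
  rw [hsplit]
  apply IntegrableOn.union
  · -- on Ioc 0 1
    have hg : IntegrableOn (fun lam : ℝ => lam ^ x * r⁻¹ ^ m) (Set.Ioc 0 1) := by
      have := intervalIntegral.intervalIntegrable_rpow' (a := 0) (b := 1) hx
      rw [intervalIntegrable_iff_integrableOn_Ioc_of_le zero_le_one] at this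
      exact this.mul_const _
    refine hg.mono' ((hcont.mono ?_).aestronglyMeasurable measurableSet_Ioc) ?_
    · exact fun y hy => hy.1
    · filter_upwards [ae_restrict_mem measurableSet_Ioc] with lam hlam
      have h0 : 0 < lam := hlam.1
      rw [Real.norm_eq_abs, _root_.abs_of_nonneg (by positivity)]
      have : (r + lam)⁻¹ ^ m ≤ r⁻¹ ^ m := by
        apply pow_le_pow_left₀ (by positivity)
        exact inv_anti₀ hr (by linarith)
      exact mul_le_mul_of_nonneg_left this (by positivity)
  · -- on Ioi 1
    have hg : IntegrableOn (fun lam : ℝ => lam ^ (x - m)) (Set.Ioi 1) :=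
      integrableOn_Ioi_rpow_of_lt hxm one_pos
    refine hg.mono' ((hcont.mono ?_).aestronglyMeasurable measurableSet_Ioi) ?_
    · exact fun y hy => show (0:ℝ) < y from lt_trans one_pos hy
    · filter_upwards [ae_restrict_mem measurableSet_Ioi] with lam hlam
      have h0 : (0:ℝ) < lam := lt_trans one_pos hlam
      rw [Real.norm_eq_abs, _root_.abs_of_nonneg (by positivity)]
      have h1 : (r + lam)⁻¹ ^ m ≤ lam⁻¹ ^ m := by
        apply pow_le_pow_left₀ (by positivity)
        exact inv_anti₀ h0 (by linarith)
      calc lam ^ x * (r + lam)⁻¹ ^ m ≤ lam ^ x * lam⁻¹ ^ m :=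
            mul_le_mul_of_nonneg_left h1 (by positivity)
        _ = lam ^ (x - m) := by
            rw [inv_pow, ← Real.rpow_natCast lam m, ← Real.rpow_neg h0.le,
              ← Real.rpow_add h0, ← sub_eq_add_neg]

lemma contOn (w : ℂ) (m : ℤ) {c : ℂ} (hc : ∀ lam : ℝ, 0 ≤ lam → c + lam ≠ 0) :
    ContinuousOn (fun lam : ℝ => (lam:ℂ)^w * (c+lam)^m) (Set.Ioi 0) := by
  intro lam hlam
  have h0 : (0:ℝ) < lam := hlam
  have h1 : ContinuousAt (fun lam : ℝ => (lam:ℂ)^w) lam := by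
    apply (continuousAt_cpow_const ?_).comp Complex.continuous_ofReal.continuousAt
    rw [Complex.mem_slitPlane_iff]
    exact Or.inl (by simpa using h0)
  have h2 : ContinuousAt (fun lam : ℝ => ((c + lam:ℂ))^m) lam :=
    ((continuous_const.add Complex.continuous_ofReal).continuousAt).zpow₀ m (Or.inl (hc lam h0.le))
  exact (h1.mul h2).continuousWithinAt

lemma normEq {w : ℂ} {c : ℂ} (m : ℕ) {lam : ℝ} (h0 : 0 < lam) :
    ‖(lam:ℂ)^w * (c+lam)^(-(m:ℤ))‖ = lam ^ w.re * (‖c+lam‖)⁻¹ ^ m := by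
  rw [norm_mul, Complex.norm_cpow_eq_rpow_re_of_pos h0, norm_zpow, zpow_neg, zpow_natCast, inv_pow]

lemma keyInt {w : ℂ} (hw : -1 < w.re) {m : ℕ} (hwm : w.re - m < -1) {c : ℂ} {ε r : ℝ}
    (hε : 0 < ε) (hr : 0 < r)
    (hc : ∀ lam : ℝ, 0 ≤ lam → ε * (r + lam) ≤ ‖c + lam‖) :
    IntegrableOn (fun lam : ℝ => (lam:ℂ)^w * (c+lam)^(-(m:ℤ))) (Set.Ioi 0) := by
  have hne : ∀ lam : ℝ, 0 ≤ lam → c + lam ≠ 0 := by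
    intro lam hlam h
    have := hc lam hlam
    rw [h, norm_zero] at this
    nlinarith
  refine Integrable.mono' (((realInt hw hwm hr).const_mul (ε⁻¹ ^ m)))
    ((contOn w (-(m:ℤ)) hne).aestronglyMeasurable measurableSet_Ioi) ?_
  filter_upwards [ae_restrict_mem measurableSet_Ioi] with lam hlam
  have h0 : (0:ℝ) < lam := hlam
  rw [normEq m h0]
  have h1 : (‖c+lam‖)⁻¹ ^ m ≤ (ε * (r+lam))⁻¹ ^ m := by
    apply pow_le_pow_left₀ (by positivity)
    exact inv_anti₀ (by positivity) (hc lam h0.le)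
  calc lam ^ w.re * (‖c+lam‖)⁻¹ ^ m ≤ lam ^ w.re * (ε * (r+lam))⁻¹ ^ m :=
        mul_le_mul_of_nonneg_left h1 (by positivity)
    _ = ε⁻¹ ^ m * (lam ^ w.re * (r + lam)⁻¹ ^ m) := by rw [mul_inv]; ring

lemma ftcKey {z : ℂ} (hz : 0 < z.re) {k : ℕ} (hkz : z.re < k) {c : ℂ} {ε r : ℝ}
    (hε : 0 < ε) (hr : 0 < r)
    (hc : ∀ lam : ℝ, 0 ≤ lam → ε * (r + lam) ≤ ‖c + lam‖) :
    (k:ℂ) * c * (∫ lam in Set.Ioi (0:ℝ), (lam:ℂ)^(z-1) * (c+lam)^(-(k:ℤ)-1))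
      = ((k:ℂ) - z) * ∫ lam in Set.Ioi (0:ℝ), (lam:ℂ)^(z-1) * (c+lam)^(-(k:ℤ)) := by
  have hne : ∀ lam : ℝ, 0 ≤ lam → c + lam ≠ 0 := by
    intro lam hlam h
    have := hc lam hlam
    rw [h, norm_zero] at this
    nlinarith
  have hcast : (-(k:ℤ)-1) = -((k+1:ℕ):ℤ) := by push_cast; ring
  have hre1 : -1 < (z-1).re := by
    rw [Complex.sub_re, Complex.one_re]; linarith
  have intA : IntegrableOn (fun lam : ℝ => (lam:ℂ)^(z-1) * (c+lam)^(-(k:ℤ))) (Set.Ioi 0) :=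
    keyInt hre1 (by rw [Complex.sub_re, Complex.one_re]; push_cast; linarith) hε hr hc
  have intJ : IntegrableOn (fun lam : ℝ => (lam:ℂ)^(z-1) * (c+lam)^(-(k:ℤ)-1)) (Set.Ioi 0) := by
    rw [hcast]
    exact keyInt hre1 (by rw [Complex.sub_re, Complex.one_re]; push_cast; linarith) hε hr hc
  have intB : IntegrableOn (fun lam : ℝ => (lam:ℂ)^z * (c+lam)^(-(k:ℤ)-1)) (Set.Ioi 0) := by
    rw [hcast]
    exact keyInt (by linarith) (by push_cast; linarith) hε hr hc
  -- FTC part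
  have hz0 : z ≠ 0 := fun h => by simp [h] at hz
  set f : ℝ → ℂ := fun lam => (lam:ℂ)^z * (c+lam)^(-(k:ℤ)) with hf
  set f' : ℝ → ℂ := fun lam => z * ((lam:ℂ)^(z-1) * (c+lam)^(-(k:ℤ)))
      + (-(k:ℂ)) * ((lam:ℂ)^z * (c+lam)^(-(k:ℤ)-1)) with hf'
  have hderiv : ∀ lam ∈ Set.Ioi (0:ℝ), HasDerivAt f (f' lam) lam := by
    intro lam hlam
    have h0 : (0:ℝ) < lam := hlam
    have h1 : HasDerivAt (fun t : ℝ => (t:ℂ)^z) (z * (lam:ℂ)^(z-1)) lam := by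
      have := (HasDerivAt.cpow_const (c := z) (hasDerivAt_id ((lam:ℝ):ℂ))
        (by rw [Complex.mem_slitPlane_iff]; exact Or.inl (by simpa using h0))).comp_ofReal
      simpa using this
    have h2 : HasDerivAt (fun t : ℝ => (c+(t:ℂ))^(-(k:ℤ)))
        ((-(k:ℤ)) * (c+(lam:ℂ))^(-(k:ℤ)-1)) lam := by
      have hin : HasDerivAt (fun w : ℂ => (c+w)^(-(k:ℤ)))
          ((-(k:ℤ)) * (c+(lam:ℂ))^(-(k:ℤ)-1)) (lam:ℂ) := by
        have := (hasDerivAt_zpow (-(k:ℤ)) (c+(lam:ℂ))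
          (Or.inl (hne lam h0.le))).comp (lam:ℂ) ((hasDerivAt_id ((lam:ℝ):ℂ)).const_add c)
        simpa [Function.comp_def] using this
      exact hin.comp_ofReal
    have := h1.mul h2
    refine this.congr_deriv ?_
    simp only [hf']
    push_cast
    ring
  have hcont : ContinuousWithinAt f (Set.Ici (0:ℝ)) 0 := by
    rw [ContinuousWithinAt]
    have hf0 : f 0 = 0 := by simp [hf, Complex.zero_cpow hz0]
    rw [hf0]
    apply squeeze_zero_norm' (a := fun t : ℝ => (ε*r)⁻¹^k * t^z.re)
    · filter_upwards [eventually_mem_nhdsWithin] with t ht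
      rcases eq_or_lt_of_le (Set.mem_Ici.mp ht) with h | h
      · simp [hf, ← h, Complex.zero_cpow hz0, Real.zero_rpow (ne_of_gt hz)]
      · rw [hf, normEq k h]
        have h1 : (‖c+t‖)⁻¹ ^ k ≤ (ε*r)⁻¹ ^ k := by
          apply pow_le_pow_left₀ (by positivity)
          refine inv_anti₀ (by positivity) (le_trans ?_ (hc t h.le))
          nlinarith
        calc t ^ z.re * (‖c+t‖)⁻¹ ^ k ≤ t ^ z.re * (ε*r)⁻¹ ^ k :=
              mul_le_mul_of_nonneg_left h1 (by positivity)
          _ = (ε*r)⁻¹^k * t^z.re := by ring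
    · have h1 : Tendsto (fun t : ℝ => t ^ z.re) (nhdsWithin 0 (Set.Ici 0)) (nhds 0) := by
        have := (Real.continuousAt_rpow_const 0 z.re (Or.inr hz.le)).tendsto
        rw [Real.zero_rpow (ne_of_gt hz)] at this
        exact this.mono_left nhdsWithin_le_nhds
      simpa using h1.const_mul ((ε*r)⁻¹^k)
  have htop : Tendsto f atTop (nhds 0) := by
    apply squeeze_zero_norm' (a := fun t : ℝ => ε⁻¹^k * t^(-((k:ℝ) - z.re)))
    · filter_upwards [Filter.eventually_gt_atTop 0] with t ht
      rw [hf, normEq k ht]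
      have h1 : (‖c+t‖)⁻¹ ^ k ≤ (ε*t)⁻¹ ^ k := by
        apply pow_le_pow_left₀ (by positivity)
        refine inv_anti₀ (by positivity) (le_trans ?_ (hc t ht.le))
        nlinarith
      calc t ^ z.re * (‖c+t‖)⁻¹ ^ k ≤ t ^ z.re * (ε*t)⁻¹ ^ k :=
            mul_le_mul_of_nonneg_left h1 (by positivity)
        _ = ε⁻¹^k * (t^z.re * t⁻¹^k) := by rw [mul_inv]; ring
        _ = ε⁻¹^k * t^(-((k:ℝ) - z.re)) := by
            rw [inv_pow t k, ← Real.rpow_natCast t k, ← Real.rpow_neg ht.le,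
              ← Real.rpow_add ht]
            ring_nf
    · have := (tendsto_rpow_neg_atTop (by push_cast; linarith : 0 < (k:ℝ) - z.re)).const_mul (ε⁻¹^k)
      simpa using this
  have intf' : IntegrableOn f' (Set.Ioi 0) := (intA.const_mul z).add (intB.const_mul _)
  have hFTC : ∫ lam in Set.Ioi (0:ℝ), f' lam = 0 := by
    rw [integral_Ioi_of_hasDerivAt_of_tendsto hcont hderiv intf' htop]
    simp [hf, Complex.zero_cpow hz0]
  have e1 : z * (∫ lam in Set.Ioi (0:ℝ), (lam:ℂ)^(z-1) * (c+lam)^(-(k:ℤ)))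
      + (-(k:ℂ)) * (∫ lam in Set.Ioi (0:ℝ), (lam:ℂ)^z * (c+lam)^(-(k:ℤ)-1)) = 0 := by
    rw [← integral_const_mul, ← integral_const_mul, ← integral_add (intA.const_mul z) (intB.const_mul _)]
    exact hFTC
  have e2 : ∫ lam in Set.Ioi (0:ℝ), (lam:ℂ)^z * (c+lam)^(-(k:ℤ)-1)
      = (∫ lam in Set.Ioi (0:ℝ), (lam:ℂ)^(z-1) * (c+lam)^(-(k:ℤ)))
        - c * ∫ lam in Set.Ioi (0:ℝ), (lam:ℂ)^(z-1) * (c+lam)^(-(k:ℤ)-1) := by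
    rw [← integral_const_mul, ← integral_sub intA (intJ.const_mul c)]
    apply setIntegral_congr_fun measurableSet_Ioi
    intro lam hlam
    have h0 : (0:ℝ) < lam := hlam
    have hl : (lam:ℂ) ≠ 0 := Complex.ofReal_ne_zero.mpr (ne_of_gt h0)
    have hcl : c + (lam:ℂ) ≠ 0 := hne lam h0.le
    have hz1 : (lam:ℂ)^z = (lam:ℂ)^(z-1) * lam := by
      conv_lhs => rw [show z = z-1+1 by ring]
      rw [Complex.cpow_add _ _ hl, Complex.cpow_one]
    have h2 : (c+(lam:ℂ))^(-(k:ℤ)) = (c+(lam:ℂ))^(-(k:ℤ)-1) * (c+(lam:ℂ)) := by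
      rw [← zpow_add_one₀ hcl, sub_add_cancel]
    simp only [hz1, h2]
    ring
  linear_combination e1 + (k:ℂ) * e2

lemma baseUnit {z : ℂ} (hz : 0 < z.re) {k : ℕ} (hk : 1 ≤ k) (hkz : z.re < k) :
    ∫ t in Set.Ioi (0:ℝ), (t:ℂ)^(z-1) * ((1:ℂ)+t)^(-(k:ℤ))
      = Complex.Gamma z * Complex.Gamma ((k:ℂ)-z) / Complex.Gamma k := by
  have himg : (fun x : ℝ => x/(1-x)) '' Set.Ioo 0 1 = Set.Ioi 0 := by
    ext y
    constructor
    · rintro ⟨x, hx, rfl⟩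
      exact div_pos hx.1 (by linarith [hx.2])
    · intro hy
      have hy0 : (0:ℝ) < y := hy
      refine ⟨y/(1+y), ⟨by positivity, ?_⟩, ?_⟩
      · rw [div_lt_one (by linarith)]; linarith
      · field_simp; ring
  have hderiv : ∀ x ∈ Set.Ioo (0:ℝ) 1, HasDerivWithinAt (fun x : ℝ => x/(1-x))
      ((1-x)⁻¹^2) (Set.Ioo 0 1) x := by
    intro x hx
    have hx1 : (1:ℝ) - x ≠ 0 := ne_of_gt (sub_pos.2 hx.2)
    have h := (hasDerivAt_id x).div ((hasDerivAt_id x).const_sub 1) hx1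
    refine (h.congr_deriv ?_).hasDerivWithinAt
    simp only [id]; field_simp; ring
  have hinj : Set.InjOn (fun x : ℝ => x/(1-x)) (Set.Ioo 0 1) := by
    intro a ha b hb h
    have ha1 : (1:ℝ) - a ≠ 0 := ne_of_gt (sub_pos.2 ha.2)
    have hb1 : (1:ℝ) - b ≠ 0 := ne_of_gt (sub_pos.2 hb.2)
    simp only at h
    rw [div_eq_div_iff ha1 hb1] at h
    nlinarith [h]
  rw [← himg, integral_image_eq_integral_abs_deriv_smul measurableSet_Ioo hderiv hinj]
  have hcong : ∫ x in Set.Ioo (0:ℝ) 1, |(1-x)⁻¹^2| •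
        ((((x/(1-x)):ℝ):ℂ)^(z-1) * ((1:ℂ)+((x/(1-x):ℝ):ℂ))^(-(k:ℤ)))
      = ∫ x in Set.Ioo (0:ℝ) 1, (x:ℂ)^(z-1) * ((1:ℂ)-(x:ℂ))^((k:ℂ)-z-1) := by
    apply setIntegral_congr_fun measurableSet_Ioo
    intro x hx
    have hx0 : (0:ℝ) < x := hx.1
    have hx1 : (0:ℝ) < 1 - x := sub_pos.2 hx.2
    have hb0 : ((1-x:ℝ):ℂ) ≠ 0 := Complex.ofReal_ne_zero.mpr (ne_of_gt hx1)
    have e1 : (((x/(1-x)):ℝ):ℂ)^(z-1) = (x:ℂ)^(z-1) * (((1-x:ℝ):ℂ))^(-(z-1)) := by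
      rw [div_eq_mul_inv, Complex.ofReal_mul,
        Complex.mul_cpow_ofReal_nonneg hx0.le (by positivity), Complex.ofReal_inv,
        Complex.inv_cpow _ _ (by
          rw [Complex.arg_ofReal_of_nonneg hx1.le]
          exact Real.pi_ne_zero.symm), ← Complex.cpow_neg]
    have er : (1:ℝ) + x/(1-x) = (1-x)⁻¹ := by
      field_simp; ring
    have e2 : (1:ℂ) + ((x/(1-x):ℝ):ℂ) = (((1-x)⁻¹ : ℝ):ℂ) := by
      rw [← er]
      push_cast
      ring
    have e3 : ((((1-x)⁻¹:ℝ)):ℂ)^(-(k:ℤ)) = (((1-x):ℝ):ℂ)^(k:ℂ) := by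
      rw [Complex.ofReal_inv, inv_zpow, ← zpow_neg, neg_neg, zpow_natCast, Complex.cpow_natCast]
    have h2 : (((1-x:ℝ):ℂ))⁻¹^2 = ((1-x:ℝ):ℂ)^(-2 : ℂ) := by
      rw [show (-2 : ℂ) = ((-2 : ℤ) : ℂ) by norm_num, Complex.cpow_intCast, zpow_neg, inv_pow]
      norm_cast
    have e4 : |(1-x)⁻¹^2| • ((x:ℂ)^(z-1) * ((1-x:ℝ):ℂ)^(-(z-1)) * ((1-x:ℝ):ℂ)^(k:ℂ))
        = (x:ℂ)^(z-1) * (((1-x):ℝ):ℂ)^((k:ℂ)-z-1) := by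
      rw [_root_.abs_of_nonneg (by positivity), Complex.real_smul, Complex.ofReal_pow,
        Complex.ofReal_inv, h2]
      calc ((1-x:ℝ):ℂ)^(-2:ℂ) * ((x:ℂ)^(z-1) * ((1-x:ℝ):ℂ)^(-(z-1)) * ((1-x:ℝ):ℂ)^(k:ℂ))
          = (x:ℂ)^(z-1) * (((1-x:ℝ):ℂ)^(-(z-1)) * ((1-x:ℝ):ℂ)^(k:ℂ) * ((1-x:ℝ):ℂ)^(-2:ℂ)) := by
            ring
        _ = (x:ℂ)^(z-1) * (((1-x):ℝ):ℂ)^((k:ℂ)-z-1) := by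
            rw [← Complex.cpow_add _ _ hb0, ← Complex.cpow_add _ _ hb0]
            congr 1
            ring
    simp only [e1, e2, e3, e4]
    push_cast
    ring_nf
  rw [hcong]
  have hbeta : ∫ x in Set.Ioo (0:ℝ) 1, (x:ℂ)^(z-1) * ((1:ℂ)-(x:ℂ))^((k:ℂ)-z-1)
      = Complex.betaIntegral z ((k:ℂ)-z) := by
    rw [Complex.betaIntegral, intervalIntegral.integral_of_le zero_le_one,
      MeasureTheory.integral_Ioc_eq_integral_Ioo]
  rw [hbeta]
  have hG := Complex.Gamma_mul_Gamma_eq_betaIntegral hz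
    (by rw [Complex.sub_re, Complex.natCast_re]; linarith : 0 < ((k:ℂ)-z).re)
  rw [show z + ((k:ℂ) - z) = (k:ℂ) by ring] at hG
  have hGk : Complex.Gamma (k:ℂ) ≠ 0 :=
    Complex.Gamma_ne_zero_of_re_pos (by simp; positivity)
  field_simp [hG]
  rw [hG]; ring

lemma baseR {z : ℂ} (hz : 0 < z.re) {k : ℕ} (hk : 1 ≤ k) (hkz : z.re < k) {r : ℝ} (hr : 0 < r) :
    ∫ lam in Set.Ioi (0:ℝ), (lam:ℂ)^(z-1) * ((r:ℂ)+lam)^(-(k:ℤ))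
      = (r:ℂ)^(z-(k:ℂ)) * (Complex.Gamma z * Complex.Gamma ((k:ℂ)-z) / Complex.Gamma k) := by
  have hrc : (r:ℂ) ≠ 0 := Complex.ofReal_ne_zero.mpr hr.ne'
  have h := integral_comp_mul_left_Ioi
    (fun lam : ℝ => (lam:ℂ)^(z-1) * ((r:ℂ)+lam)^(-(k:ℤ))) 0 hr
  rw [mul_zero] at h
  have h2 : ∫ x in Set.Ioi (0:ℝ), ((r*x:ℝ):ℂ)^(z-1) * ((r:ℂ)+((r*x:ℝ):ℂ))^(-(k:ℤ))
      = ((r:ℂ)^(z-1) * (r:ℂ)^(-(k:ℤ))) * ∫ x in Set.Ioi (0:ℝ),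
          (x:ℂ)^(z-1) * ((1:ℂ)+x)^(-(k:ℤ)) := by
    rw [← integral_const_mul]
    apply setIntegral_congr_fun measurableSet_Ioi
    intro x hx
    have hx0 : (0:ℝ) < x := hx
    simp only
    rw [Complex.ofReal_mul, Complex.mul_cpow_ofReal_nonneg hr.le hx0.le,
      show (r:ℂ) + ((r:ℝ):ℂ)*((x:ℝ):ℂ) = (r:ℂ) * (1+(x:ℂ)) by push_cast; ring, mul_zpow]
    ring
  have h3 := congrArg (fun w => (r:ℝ) • w) h
  simp only [smul_smul, mul_inv_cancel₀ hr.ne', one_smul] at h3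
  rw [← h3, h2, baseUnit hz hk hkz]
  rw [Complex.real_smul]
  have hpow : (r:ℂ) * ((r:ℂ)^(z-1) * (r:ℂ)^(-(k:ℤ))) = (r:ℂ)^(z-(k:ℂ)) := by
    rw [show ((r:ℂ))^(-(k:ℤ)) = (r:ℂ)^(((-(k:ℤ)) : ℤ):ℂ) from (Complex.cpow_intCast _ _).symm,
      ← Complex.cpow_add _ _ hrc]
    nth_rewrite 1 [show (r:ℂ) = (r:ℂ)^(1:ℂ) from (Complex.cpow_one _).symm]
    rw [← Complex.cpow_add _ _ hrc]
    congr 1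
    push_cast
    ring
  calc (r:ℂ) * ((r:ℂ)^(z-1) * (r:ℂ)^(-(k:ℤ))
          * (Complex.Gamma z * Complex.Gamma ((k:ℂ)-z) / Complex.Gamma k))
      = ((r:ℂ) * ((r:ℂ)^(z-1) * (r:ℂ)^(-(k:ℤ))))
          * (Complex.Gamma z * Complex.Gamma ((k:ℂ)-z) / Complex.Gamma k) := by ring
    _ = (r:ℂ)^(z-(k:ℂ)) * (Complex.Gamma z * Complex.Gamma ((k:ℂ)-z) / Complex.Gamma k) := by
        rw [hpow]

lemma mainAux {z : ℂ} (hz : 0 < z.re) {k : ℕ} (hk : 1 ≤ k) (hkz : z.re < k)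
    {r : ℝ} (hr : 0 < r) {θ : ℝ} (hθ : |θ| < Real.pi) :
    Complex.exp (Complex.I*((k:ℂ)-z)*θ) *
      ∫ lam in Set.Ioi (0:ℝ), (lam:ℂ)^(z-1) * ((r:ℂ)*Complex.exp (θ*Complex.I)+lam)^(-(k:ℤ))
    = ∫ lam in Set.Ioi (0:ℝ), (lam:ℂ)^(z-1) * ((r:ℂ)+lam)^(-(k:ℤ)) := by
  have hbound : ∀ M : ℝ, M < Real.pi → ∀ φ : ℝ, |φ| ≤ M → ∀ lam : ℝ, 0 ≤ lam →
      Real.sqrt ((1 + Real.cos M)/2) * (r + lam)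
        ≤ ‖(r:ℂ)*Complex.exp (φ*Complex.I)+lam‖ := by
    intro M hMπ φ hφ lam hlam
    refine le_trans ?_ (absBound r φ hr.le lam hlam)
    refine mul_le_mul_of_nonneg_right ?_ (by linarith)
    apply Real.sqrt_le_sqrt
    have h1 : Real.cos M ≤ Real.cos φ := by
      rw [← Real.cos_abs φ]
      exact Real.cos_le_cos_of_nonneg_of_le_pi (abs_nonneg φ) hMπ.le hφ
    linarith
  have hεpos : ∀ M : ℝ, 0 ≤ M → M < Real.pi → 0 < Real.sqrt ((1 + Real.cos M)/2) := by
    intro M hM0 hMπ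
    have h1 : Real.cos Real.pi < Real.cos M :=
      Real.cos_lt_cos_of_nonneg_of_le_pi hM0 le_rfl hMπ
    rw [Real.cos_pi] at h1
    apply Real.sqrt_pos.mpr
    linarith
  set f : ℝ → ℂ := fun t => Complex.exp (Complex.I*((k:ℂ)-z)*t) *
      ∫ lam in Set.Ioi (0:ℝ), (lam:ℂ)^(z-1) * ((r:ℂ)*Complex.exp (t*Complex.I)+lam)^(-(k:ℤ))
    with hfdef
  have hre1 : -1 < (z-1).re := by rw [Complex.sub_re, Complex.one_re]; linarith
  have hre2 : (z-1).re - (k:ℕ) < -1 := by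
    rw [Complex.sub_re, Complex.one_re]; push_cast; linarith
  have hderiv : ∀ φ : ℝ, |φ| < Real.pi → HasDerivAt f 0 φ := by
    intro φ hφ
    set M : ℝ := (|φ| + Real.pi)/2 with hMdef
    have hM0 : 0 ≤ M := by
      have := abs_nonneg φ
      have := Real.pi_pos
      rw [hMdef]; linarith
    have hMπ : M < Real.pi := by rw [hMdef]; linarith
    have hφM : |φ| ≤ M := by rw [hMdef]; linarith
    set ε₀ : ℝ := Real.sqrt ((1 + Real.cos M)/2) with hε₀def
    have hε₀ : 0 < ε₀ := hεpos M hM0 hMπ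
    set δ : ℝ := (Real.pi - |φ|)/2 with hδdef
    have hδ : 0 < δ := by rw [hδdef]; linarith
    have hball : ∀ ψ ∈ Metric.ball φ δ, |ψ| ≤ M := by
      intro ψ hψ
      have h1 : |ψ - φ| < δ := by rw [← Real.dist_eq]; exact hψ
      have h2 := abs_add_le φ (ψ - φ)
      rw [add_sub_cancel] at h2
      rw [hMdef]
      have := abs_sub_abs_le_abs_sub ψ φ
      linarith [abs_nonneg (ψ - φ)]
    have hne : ∀ ψ : ℝ, |ψ| ≤ M → ∀ lam : ℝ, 0 ≤ lam →
        (r:ℂ)*Complex.exp (ψ*Complex.I)+lam ≠ 0 := by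
      intro ψ hψ lam hlam h
      have := hbound M hMπ ψ hψ lam hlam
      rw [h, norm_zero] at this
      nlinarith
    have hcast : (-(k:ℤ)-1) = -(((k+1):ℕ):ℤ) := by push_cast; ring
    have key := hasDerivAt_integral_of_dominated_loc_of_deriv_le
      (μ := volume.restrict (Set.Ioi (0:ℝ))) (x₀ := φ) (s := Metric.ball φ δ)
      (F := fun (ψ : ℝ) (lam : ℝ) =>
        (lam:ℂ)^(z-1) * ((r:ℂ)*Complex.exp (ψ*Complex.I)+lam)^(-(k:ℤ)))
      (F' := fun (ψ : ℝ) (lam : ℝ) =>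
        ((lam:ℂ)^(z-1) * ((r:ℂ)*Complex.exp (ψ*Complex.I)+lam)^(-(k:ℤ)-1))
          * ((-(k:ℂ)) * ((r:ℂ)*Complex.I*Complex.exp (ψ*Complex.I))))
      (bound := fun lam => ((k:ℝ) * r * (ε₀⁻¹^(k+1))) * (lam^(z.re-1) * (r+lam)⁻¹^(k+1)))
      (Metric.ball_mem_nhds φ hδ) ?_ ?_ ?_ ?_ ?_ ?_
    rotate_left
    · -- measurability eventually
      filter_upwards [Metric.ball_mem_nhds φ hδ] with ψ hψ
      exact (contOn (z-1) (-(k:ℤ)) (hne ψ (hball ψ hψ))).aestronglyMeasurable measurableSet_Ioi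
    · exact keyInt hre1 hre2 hε₀ hr (hbound M hMπ φ hφM)
    · exact ((contOn (z-1) (-(k:ℤ)-1) (hne φ hφM)).aestronglyMeasurable
        measurableSet_Ioi).mul_const _
    · -- bound
      filter_upwards [ae_restrict_mem measurableSet_Ioi] with lam hlam ψ hψ
      have h0 : (0:ℝ) < lam := hlam
      rw [norm_mul]
      have e1 : ‖(lam:ℂ)^(z-1) * ((r:ℂ)*Complex.exp (ψ*Complex.I)+lam)^(-(k:ℤ)-1)‖
          = lam ^ (z-1).re * (‖(r:ℂ)*Complex.exp (ψ*Complex.I)+lam‖)⁻¹ ^ (k+1) := by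
        rw [hcast, normEq (k+1) h0]
      have e2 : ‖(-(k:ℂ)) * ((r:ℂ)*Complex.I*Complex.exp (ψ*Complex.I))‖ = (k:ℝ) * r := by
        rw [norm_mul, norm_neg, Complex.norm_natCast, norm_mul, norm_mul,
          Complex.norm_real, Real.norm_eq_abs, Complex.norm_I, Complex.norm_exp_ofReal_mul_I,
          _root_.abs_of_nonneg hr.le]
        ring
      rw [e1, e2]
      have h1 : (‖(r:ℂ)*Complex.exp (ψ*Complex.I)+lam‖)⁻¹ ^ (k+1)
          ≤ (ε₀ * (r+lam))⁻¹ ^ (k+1) := by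
        apply pow_le_pow_left₀ (by positivity)
        exact inv_anti₀ (by positivity) (hbound M hMπ ψ (hball ψ hψ) lam h0.le)
      have hzre : (z-1).re = z.re - 1 := by rw [Complex.sub_re, Complex.one_re]
      calc lam ^ (z-1).re * (‖(r:ℂ)*Complex.exp (ψ*Complex.I)+lam‖)⁻¹ ^ (k+1)
            * ((k:ℝ) * r)
          ≤ lam ^ (z-1).re * (ε₀ * (r+lam))⁻¹ ^ (k+1) * ((k:ℝ) * r) := by
            apply mul_le_mul_of_nonneg_right _ (by positivity)
            exact mul_le_mul_of_nonneg_left h1 (by positivity)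
        _ = ((k:ℝ) * r * (ε₀⁻¹^(k+1))) * (lam^(z.re-1) * (r+lam)⁻¹^(k+1)) := by
            rw [hzre, mul_inv, mul_pow]
            ring
    · exact (realInt (by linarith) (by push_cast; linarith) hr).const_mul _
    · -- differentiability
      filter_upwards [ae_restrict_mem measurableSet_Ioi] with lam hlam ψ hψ
      have h0 : (0:ℝ) < lam := hlam
      have hcne : (r:ℂ)*Complex.exp (ψ*Complex.I)+lam ≠ 0 := hne ψ (hball ψ hψ) lam h0.le
      have h1 : HasDerivAt (fun w:ℂ => (r:ℂ)*Complex.exp (w*Complex.I))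
          ((r:ℂ)*(Complex.exp ((ψ:ℂ)*Complex.I)*Complex.I)) (ψ:ℂ) := by
        simpa using (((hasDerivAt_id ((ψ:ℝ):ℂ)).mul_const Complex.I).cexp).const_mul (r:ℂ)
      have h2 : HasDerivAt (fun w:ℂ => ((r:ℂ)*Complex.exp (w*Complex.I)+lam)^(-(k:ℤ)))
          ((-(k:ℤ)) * ((r:ℂ)*Complex.exp ((ψ:ℂ)*Complex.I)+lam)^(-(k:ℤ)-1)
            * ((r:ℂ)*(Complex.exp ((ψ:ℂ)*Complex.I)*Complex.I))) (ψ:ℂ) := by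
        have h2' := (hasDerivAt_zpow (-(k:ℤ)) _ (Or.inl hcne)).comp (ψ:ℂ) (h1.add_const (lam:ℂ))
        refine h2'.congr_deriv ?_
        push_cast
        ring
      have h3 := (h2.comp_ofReal).const_mul ((lam:ℂ)^(z-1))
      refine h3.congr_deriv ?_
      push_cast
      ring
    obtain ⟨-, hGd⟩ := key
    have hftc := ftcKey hz hkz hε₀ hr (hbound M hMπ φ hφM)
      (c := (r:ℂ)*Complex.exp (φ*Complex.I))
    have hD : (∫ lam in Set.Ioi (0:ℝ),
          ((lam:ℂ)^(z-1) * ((r:ℂ)*Complex.exp (φ*Complex.I)+lam)^(-(k:ℤ)-1))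
            * ((-(k:ℂ)) * ((r:ℂ)*Complex.I*Complex.exp (φ*Complex.I))))
        = (-(Complex.I*((k:ℂ)-z))) * ∫ lam in Set.Ioi (0:ℝ),
            (lam:ℂ)^(z-1) * ((r:ℂ)*Complex.exp (φ*Complex.I)+lam)^(-(k:ℤ)) := by
      rw [integral_mul_const]
      linear_combination (-Complex.I) * hftc
    rw [hD] at hGd
    have hE : HasDerivAt (fun t:ℝ => Complex.exp (Complex.I*((k:ℂ)-z)*t))
        (Complex.I*((k:ℂ)-z) * Complex.exp (Complex.I*((k:ℂ)-z)*φ)) φ := by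
      have h1 : HasDerivAt (fun w:ℂ => Complex.exp (Complex.I*((k:ℂ)-z)*w))
          (Complex.exp (Complex.I*((k:ℂ)-z)*(φ:ℂ)) * (Complex.I*((k:ℂ)-z))) (φ:ℂ) := by
        simpa using ((hasDerivAt_id ((φ:ℝ):ℂ)).const_mul (Complex.I*((k:ℂ)-z))).cexp
      have := h1.comp_ofReal
      convert this using 1
      ring
    have := hE.mul hGd
    refine this.congr_deriv ?_
    ring
  rcases le_or_gt 0 θ with h0 | h0
  · have hcont : ContinuousOn f (Set.Icc 0 θ) := by
      intro x hx
      have hx' : |x| < Real.pi := by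
        rw [abs_lt] at hθ ⊢
        constructor <;> [linarith [hx.1, Real.pi_pos]; linarith [hx.2, hθ.2]]
      exact ((hderiv x hx').continuousAt).continuousWithinAt
    have hder : ∀ x ∈ Set.Ico 0 θ, HasDerivWithinAt f 0 (Set.Ici x) x := by
      intro x hx
      have hx' : |x| < Real.pi := by
        rw [abs_lt] at hθ ⊢
        constructor <;> [linarith [hx.1, Real.pi_pos]; linarith [hx.2, hθ.2]]
      exact (hderiv x hx').hasDerivWithinAt
    have h1 := constant_of_has_deriv_right_zero hcont hder θ ⟨h0, le_refl θ⟩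
    have h2 : f 0 = ∫ lam in Set.Ioi (0:ℝ), (lam:ℂ)^(z-1) * ((r:ℂ)+lam)^(-(k:ℤ)) := by
      rw [hfdef]
      simp
    rw [← h2]
    exact h1
  · have hcont : ContinuousOn f (Set.Icc θ 0) := by
      intro x hx
      have hx' : |x| < Real.pi := by
        rw [abs_lt] at hθ ⊢
        constructor <;> [linarith [hx.1, hθ.1]; linarith [hx.2, Real.pi_pos]]
      exact ((hderiv x hx').continuousAt).continuousWithinAt
    have hder : ∀ x ∈ Set.Ico θ 0, HasDerivWithinAt f 0 (Set.Ici x) x := by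
      intro x hx
      have hx' : |x| < Real.pi := by
        rw [abs_lt] at hθ ⊢
        constructor <;> [linarith [hx.1, hθ.1]; linarith [hx.2, Real.pi_pos]]
      exact (hderiv x hx').hasDerivWithinAt
    have h1 := constant_of_has_deriv_right_zero hcont hder 0 ⟨h0.le, le_refl 0⟩
    have h2 : f 0 = ∫ lam in Set.Ioi (0:ℝ), (lam:ℂ)^(z-1) * ((r:ℂ)+lam)^(-(k:ℤ)) := by
      rw [hfdef]
      simp
    rw [← h2]
    exact h1.symm

/-- For `Re z > 0`, an integer `k > Re z`, and `ζ ≠ 0` with `|arg ζ| < π`,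
`∫_0^∞ λ^{z-1} ζ^k / (ζ + λ)^k dλ = ζ^z / γ_k(z)` where
`γ_k(z) = Γ(k) / (Γ(z) Γ(k - z))` and `ζ^z` uses the principal logarithm. -/
theorem stmt3 (z : ℂ) (hz : 0 < z.re) (k : ℕ) (hk : 1 ≤ k) (hkz : z.re < k)
    (ζ : ℂ) (hζ : ζ ≠ 0) (harg : |Complex.arg ζ| < Real.pi) :
    ∫ lam in Set.Ioi (0 : ℝ), (lam : ℂ) ^ (z - 1) * ζ ^ k / (ζ + lam) ^ k =
      ζ ^ z / (Complex.Gamma k / (Complex.Gamma z * Complex.Gamma ((k : ℂ) - z))) := by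
  set r : ℝ := ‖ζ‖ with hrdef
  have hr : 0 < r := norm_pos_iff.mpr hζ
  set θ : ℝ := Complex.arg ζ with hθdef
  have hζeq : (r:ℂ) * Complex.exp (θ*Complex.I) = ζ := Complex.norm_mul_exp_arg_mul_I ζ
  have hrc : (r:ℂ) ≠ 0 := Complex.ofReal_ne_zero.mpr hr.ne'
  have h1 : ∫ lam in Set.Ioi (0:ℝ), (lam:ℂ)^(z-1) * ζ^k / (ζ+lam)^k
      = ζ^k * ∫ lam in Set.Ioi (0:ℝ),
          (lam:ℂ)^(z-1) * (((r:ℂ)*Complex.exp (θ*Complex.I))+lam)^(-(k:ℤ)) := by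
    rw [← integral_const_mul]
    apply setIntegral_congr_fun measurableSet_Ioi
    intro lam _
    simp only
    rw [hζeq, zpow_neg, zpow_natCast, div_eq_mul_inv]
    ring
  rw [h1]
  have hmain := mainAux hz hk hkz hr (θ := θ) harg
  have hbase := baseR hz hk hkz hr
  set B := Complex.Gamma z * Complex.Gamma ((k:ℂ)-z) / Complex.Gamma k with hBdef
  have hGθ : ∫ lam in Set.Ioi (0:ℝ),
        (lam:ℂ)^(z-1) * (((r:ℂ)*Complex.exp (θ*Complex.I))+lam)^(-(k:ℤ))
      = (Complex.exp (Complex.I*((k:ℂ)-z)*θ))⁻¹ * ((r:ℂ)^(z-(k:ℂ)) * B) := by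
    rw [← hbase, ← hmain]
    rw [← mul_assoc, inv_mul_cancel₀ (Complex.exp_ne_zero _), one_mul]
  rw [hGθ]
  have hRHS : ζ^z / (Complex.Gamma k / (Complex.Gamma z * Complex.Gamma ((k:ℂ)-z)))
      = ζ^z * B := by
    rw [hBdef, div_div_eq_mul_div, mul_div_assoc]
  rw [hRHS]
  have hlog : Complex.log ζ = (Real.log r : ℂ) + (θ:ℂ)*Complex.I := rfl
  have hζk : ζ^k = Complex.exp ((k:ℂ) * Complex.log ζ) := by
    rw [Complex.exp_nat_mul, Complex.exp_log hζ]
  have hζz : ζ^z = Complex.exp (Complex.log ζ * z) := Complex.cpow_def_of_ne_zero hζ z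
  have hrpow : (r:ℂ)^(z-(k:ℂ)) = Complex.exp (Complex.log ((r:ℝ):ℂ) * (z-(k:ℂ))) :=
    Complex.cpow_def_of_ne_zero hrc _
  have hlogr : Complex.log ((r:ℝ):ℂ) = ((Real.log r : ℝ):ℂ) := (Complex.ofReal_log hr.le).symm
  rw [show (Complex.exp (Complex.I*((k:ℂ)-z)*θ))⁻¹
      = Complex.exp (-(Complex.I*((k:ℂ)-z)*θ)) from (Complex.exp_neg _).symm]
  rw [hζk, hζz, hrpow, hlogr, hlog]
  rw [show Complex.exp ((k:ℂ) * ((Real.log r : ℂ) + (θ:ℂ)*Complex.I)) *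
        (Complex.exp (-(Complex.I*((k:ℂ)-z)*θ)) *
          (Complex.exp (((Real.log r : ℝ):ℂ) * (z-(k:ℂ))) * B))
      = Complex.exp ((k:ℂ) * ((Real.log r : ℂ) + (θ:ℂ)*Complex.I)
          + (-(Complex.I*((k:ℂ)-z)*θ)) + ((Real.log r : ℝ):ℂ) * (z-(k:ℂ))) * B from by
    rw [Complex.exp_add, Complex.exp_add]
    ring]
  congr 2
  ring
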